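/- Let A be a Pickands dependence function, let x₁ ∈ (0,1) be such that A is affine on [0,x₁], set y₁ = A(x₁), and let x ∈ (0,x₁) and y ∈ ℝ. Suppose B is a Pickands dependence function such that B = A on [x₁,1], B is affine on [0,x] and on [x,x₁], and B(x) = y. Then τ(B) − τ(A) = (x₁ − x + x·y₁ − x₁·y)·(y₁ − y − x·y₁ + x₁·y) / ((x₁−x)·y·y₁). -/

import Mathlib

open MeasureTheory

/-- A Pickands dependence function: a convex function on `[0,1]` with
`max (1 - t) t ≤ A t ≤ 1` for all `t ∈ [0,1]`. -/
def IsPickands (A : ℝ → ℝ) : Prop :=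
  ConvexOn ℝ (Set.Icc (0 : ℝ) 1) A ∧
    ∀ t ∈ Set.Icc (0 : ℝ) 1, max (1 - t) t ≤ A t ∧ A t ≤ 1

/-- The right-hand derivative `D⁺A` of `A` on `[0,1)`, extended constantly by `D⁺A 0`
to the left of `0` and by the value `1` on `[1,∞)` (the integrand of Kendall's tau
vanishes at the endpoints, so these conventions do not affect it). -/
noncomputable def pickandsD (A : ℝ → ℝ) (t : ℝ) : ℝ :=
  if t < 0 then derivWithin A (Set.Ioi (0 : ℝ)) 0
  else if t < 1 then derivWithin A (Set.Ioi t) t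
  else 1

open scoped Classical in
/-- Kendall's tau of a Pickands dependence function `A`:
`τ(A) = ∫_{[0,1]} t (1 - t) / A t  d(D⁺A)(t)`, the integral being taken with respect to
the Lebesgue–Stieltjes measure induced by the nondecreasing right-continuous
function `D⁺A`. (For a Pickands function `A`, `pickandsD A` is monotone, so the
junk value `0` of the `else` branch is never used.) -/
noncomputable def kendallTau (A : ℝ → ℝ) : ℝ :=
  if h : Monotone (pickandsD A) then
    ∫ t in Set.Icc (0 : ℝ) 1, t * (1 - t) / A t ∂h.stieltjesFunction.measure
  else 0

/-- Spearman's rho of a Pickands dependence function: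
`ρ(A) = 12 ∫₀¹ 1 / (1 + A t)² dt - 3`. -/
noncomputable def spearmanRho (A : ℝ → ℝ) : ℝ :=
  12 * (∫ t in (0 : ℝ)..1, 1 / (1 + A t) ^ 2) - 3

/-- `A` is affine on the interval `[p,q]`. -/
def AffineOnIcc (A : ℝ → ℝ) (p q : ℝ) : Prop :=
  ∃ a b : ℝ, ∀ t ∈ Set.Icc p q, A t = a * t + b

/-- The triangular Pickands dependence function `T_{x₁,y₁}`: affine on `[0,x₁]` and on
`[x₁,1]` with `T 0 = T 1 = 1` and `T x₁ = y₁`. -/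
noncomputable def triangular (x₁ y₁ : ℝ) (t : ℝ) : ℝ :=
  if t ≤ x₁ then 1 + (y₁ - 1) * t / x₁
  else y₁ + (1 - y₁) * (t - x₁) / (1 - x₁)

/-- The functional `Δ(C,D) = ρ(C) - ρ(D) - (3τ(C)/(2+τ(C)) - 3τ(D)/(2+τ(D)))`. -/
noncomputable def Delta (C D : ℝ → ℝ) : ℝ :=
  spearmanRho C - spearmanRho D -
    (3 * kendallTau C / (2 + kendallTau C) - 3 * kendallTau D / (2 + kendallTau D))

section KendallTauAux

open MeasureTheory Set Filter Function
open scoped Topology ENNReal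


lemma convex_hasDerivWithinAt_Ioi {f : ℝ → ℝ} (hf : ConvexOn ℝ (Set.Icc 0 1) f) {t : ℝ}
    (ht : t ∈ Set.Ioo (0:ℝ) 1) :
    HasDerivWithinAt f (sInf (slope f t '' Set.Ioo t 1)) (Set.Ioi t) t := by
  have hne : (Set.Ioo t 1).Nonempty := nonempty_Ioo.2 ht.2
  have htI : t ∈ Set.Icc (0:ℝ) 1 := ⟨ht.1.le, ht.2.le⟩
  have hmono : MonotoneOn (slope f t) (Set.Ioo t 1) := by
    apply (hf.slope_mono htI).mono
    intro u hu
    exact ⟨⟨(ht.1.trans hu.1).le, hu.2.le⟩, hu.1.ne'⟩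
  have hbdd : BddBelow (slope f t '' Set.Ioo t 1) := by
    refine ⟨slope f t 0, ?_⟩
    rintro v ⟨u, hu, rfl⟩
    exact hf.slope_mono htI ⟨⟨le_rfl, zero_le_one⟩, ht.1.ne⟩
      ⟨⟨(ht.1.trans hu.1).le, hu.2.le⟩, hu.1.ne'⟩ ((ht.1.trans hu.1).le)
  have htt := MonotoneOn.tendsto_nhdsWithin_Ioo_right hne hmono hbdd
  rw [hasDerivWithinAt_iff_tendsto_slope' notMem_Ioi_self]
  exact htt

lemma convex_rderiv_le_slope {f : ℝ → ℝ} (hf : ConvexOn ℝ (Set.Icc 0 1) f) {t u : ℝ}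
    (ht : t ∈ Set.Ioo (0:ℝ) 1) (hu : u ∈ Set.Icc (0:ℝ) 1) (htu : t < u) :
    derivWithin f (Set.Ioi t) t ≤ slope f t u :=
  hf.rightDeriv_le_slope ⟨ht.1.le, ht.2.le⟩ hu htu
    (convex_hasDerivWithinAt_Ioi hf ht).differentiableWithinAt

lemma convex_slope_le_rderiv {f : ℝ → ℝ} (hf : ConvexOn ℝ (Set.Icc 0 1) f) {s t : ℝ}
    (hs : s ∈ Set.Icc (0:ℝ) 1) (ht : t ∈ Set.Ioo (0:ℝ) 1) (hst : s < t) :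
    slope f s t ≤ derivWithin f (Set.Ioi t) t := by
  rw [(convex_hasDerivWithinAt_Ioi hf ht).derivWithin (uniqueDiffWithinAt_Ioi t)]
  refine le_csInf ((nonempty_Ioo.2 ht.2).image _) ?_
  rintro v ⟨u, hu, rfl⟩
  rw [slope_comm]
  exact hf.slope_mono ⟨ht.1.le, ht.2.le⟩ ⟨hs, hst.ne⟩
    ⟨⟨(ht.1.trans hu.1).le, hu.2.le⟩, hu.1.ne'⟩ ((hst.trans hu.1).le)

lemma affine_hasDerivWithinAt {f : ℝ → ℝ} {a b p q s : ℝ}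
    (h : ∀ t ∈ Set.Icc p q, f t = a * t + b) (hs : s ∈ Set.Ico p q) :
    HasDerivWithinAt f a (Set.Ioi s) s := by
  have hlin : HasDerivWithinAt (fun t => a * t + b) a (Set.Ioi s) s := by
    simpa using (((hasDerivAt_id s).const_mul a).add_const b).hasDerivWithinAt
  refine hlin.congr_of_eventuallyEq ?_ (h s ⟨hs.1, hs.2.le⟩)
  filter_upwards [Ioo_mem_nhdsGT_of_mem ⟨le_refl s, hs.2⟩] with t ht
  exact h t ⟨hs.1.trans ht.1.le, ht.2.le⟩

lemma rightLim_const_on {F : ℝ → ℝ} {t u c : ℝ} (htu : t < u)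
    (h : ∀ v, t < v → v < u → F v = c) : Function.rightLim F t = c := by
  apply rightLim_eq_of_tendsto
  apply Tendsto.congr' _ tendsto_const_nhds
  filter_upwards [Ioo_mem_nhdsGT_of_mem ⟨le_refl t, htu⟩] with v hv
  exact (h v hv.1 hv.2).symm

lemma leftLim_const_on {F : ℝ → ℝ} {t u c : ℝ} (htu : u < t)
    (h : ∀ v, u < v → v < t → F v = c) : Function.leftLim F t = c := by
  apply leftLim_eq_of_tendsto
  apply Tendsto.congr' _ tendsto_const_nhds
  filter_upwards [Ioo_mem_nhdsLT_of_mem ⟨htu, le_refl t⟩] with v hv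
  exact (h v hv.1 hv.2).symm

lemma kendallTau_piecewise {C : ℝ → ℝ} {x x₁ a1 b1 a2 b2 : ℝ} (hC : IsPickands C)
    (hx : 0 < x) (hxx : x < x₁) (hx₁ : x₁ < 1)
    (h1 : ∀ t ∈ Set.Icc (0:ℝ) x, C t = a1 * t + b1)
    (h2 : ∀ t ∈ Set.Icc x x₁, C t = a2 * t + b2) :
    ∃ hM : Monotone (pickandsD C),
      kendallTau C = x * (1 - x) / C x * (a2 - a1)
        + x₁ * (1 - x₁) / C x₁ * (Function.rightLim (pickandsD C) x₁ - a2)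
        + ∫ t in Set.Ioo x₁ 1, t * (1 - t) / C t ∂hM.stieltjesFunction.measure := by
  obtain ⟨hcv, hbound⟩ := hC
  have hx₁0 : 0 < x₁ := hx.trans hxx
  have hxI : x ∈ Icc (0:ℝ) 1 := ⟨hx.le, (hxx.trans hx₁).le⟩
  have hx₁I : x₁ ∈ Icc (0:ℝ) 1 := ⟨hx₁0.le, hx₁.le⟩
  have hx₁O : x₁ ∈ Ioo (0:ℝ) 1 := ⟨hx₁0, hx₁⟩
  have hC1 : C 1 = 1 := by
    have h := hbound 1 ⟨zero_le_one, le_rfl⟩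
    have : (1:ℝ) ≤ C 1 := le_trans (by norm_num) h.1
    linarith [h.2]
  have hhalf : ∀ t ∈ Icc (0:ℝ) 1, 1/2 ≤ C t := by
    intro t ht
    refine le_trans ?_ (hbound t ht).1
    rcases le_or_gt t (1/2) with h|h
    · exact le_max_of_le_left (by linarith)
    · exact le_max_of_le_right h.le
  have hpos : ∀ t ∈ Icc (0:ℝ) 1, 0 < C t := fun t ht => lt_of_lt_of_le (by norm_num) (hhalf t ht)
  have htle : ∀ t ∈ Icc (0:ℝ) 1, t ≤ C t := fun t ht => (le_max_right _ _).trans (hbound t ht).1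
  have hxne : x₁ - x ≠ 0 := sub_ne_zero.2 hxx.ne'
  have hsl1 : slope C 0 x = a1 := by
    rw [slope_def_field, h1 x ⟨hx.le, le_rfl⟩, h1 0 ⟨le_rfl, hx.le⟩]
    rw [div_eq_iff (by linarith)]; ring
  have hsl2 : slope C x x₁ = a2 := by
    rw [slope_def_field, h2 x₁ ⟨hxx.le, le_rfl⟩, h2 x ⟨le_rfl, hxx.le⟩]
    field_simp
    ring
  have ha12 : a1 ≤ a2 := by
    rw [← hsl1, ← hsl2, slope_comm]
    exact hcv.slope_mono hxI ⟨⟨le_rfl, zero_le_one⟩, hx.ne⟩ ⟨hx₁I, hxx.ne'⟩ hx₁0.le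
  -- values of pickandsD C
  have hFlt : ∀ t : ℝ, t < x → pickandsD C t = a1 := by
    intro t htx
    by_cases ht0 : t < 0
    · rw [pickandsD, if_pos ht0]
      exact (affine_hasDerivWithinAt h1 ⟨le_rfl, hx⟩).derivWithin (uniqueDiffWithinAt_Ioi 0)
    · rw [pickandsD, if_neg ht0, if_pos (htx.trans (hxx.trans hx₁))]
      exact (affine_hasDerivWithinAt h1 ⟨not_lt.1 ht0, htx⟩).derivWithin (uniqueDiffWithinAt_Ioi t)
  have hFmid : ∀ t : ℝ, x ≤ t → t < x₁ → pickandsD C t = a2 := by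
    intro t hxt htx₁
    rw [pickandsD, if_neg (not_lt.2 (hx.le.trans hxt)), if_pos (htx₁.trans hx₁)]
    exact (affine_hasDerivWithinAt h2 ⟨hxt, htx₁⟩).derivWithin (uniqueDiffWithinAt_Ioi t)
  have hFtop : ∀ t : ℝ, 1 ≤ t → pickandsD C t = 1 := by
    intro t ht
    rw [pickandsD, if_neg (not_lt.2 (zero_le_one.trans ht)), if_neg (not_lt.2 ht)]
  have hFright : ∀ t ∈ Ico x₁ 1, pickandsD C t = derivWithin C (Set.Ioi t) t := by
    intro t ht
    rw [pickandsD, if_neg (not_lt.2 (hx₁0.le.trans ht.1)), if_pos ht.2]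
  have hO2 : ∀ t ∈ Ico x₁ 1, a2 ≤ derivWithin C (Set.Ioi t) t := by
    intro t ht
    have htO : t ∈ Ioo (0:ℝ) 1 := ⟨hx₁0.trans_le ht.1, ht.2⟩
    have h' : slope C x t ≤ derivWithin C (Set.Ioi t) t :=
      convex_slope_le_rderiv hcv hxI htO (hxx.trans_le ht.1)
    refine le_trans ?_ h'
    rw [← hsl2]
    exact hcv.slope_mono hxI ⟨hx₁I, hxx.ne'⟩
      ⟨⟨htO.1.le, htO.2.le⟩, (hxx.trans_le ht.1).ne'⟩ ht.1
  have hO4 : ∀ t ∈ Ico x₁ 1, derivWithin C (Set.Ioi t) t ≤ 1 := by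
    intro t ht
    have htO : t ∈ Ioo (0:ℝ) 1 := ⟨hx₁0.trans_le ht.1, ht.2⟩
    refine (convex_rderiv_le_slope hcv htO ⟨zero_le_one, le_rfl⟩ ht.2).trans ?_
    rw [slope_def_field, hC1, div_le_one (by linarith [ht.2] : (0:ℝ) < 1 - t)]
    have := htle t ⟨htO.1.le, htO.2.le⟩
    linarith
  have hO3 : ∀ s t : ℝ, s ∈ Ico x₁ 1 → t ∈ Ico x₁ 1 → s ≤ t →
      derivWithin C (Set.Ioi s) s ≤ derivWithin C (Set.Ioi t) t := by
    intro s t hs ht hst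
    rcases eq_or_lt_of_le hst with rfl|h
    · exact le_rfl
    · have hsO : s ∈ Ioo (0:ℝ) 1 := ⟨hx₁0.trans_le hs.1, hs.2⟩
      have htO : t ∈ Ioo (0:ℝ) 1 := ⟨hx₁0.trans_le ht.1, ht.2⟩
      exact (convex_rderiv_le_slope hcv hsO ⟨htO.1.le, htO.2.le⟩ h).trans
        (convex_slope_le_rderiv hcv ⟨hsO.1.le, hsO.2.le⟩ htO h)
  have hM : Monotone (pickandsD C) := by
    intro u v huv
    rcases lt_or_ge v x with hv|hv
    · rw [hFlt u (lt_of_le_of_lt huv hv), hFlt v hv]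
    rcases lt_or_ge v x₁ with hv1|hv1
    · rw [hFmid v hv hv1]
      rcases lt_or_ge u x with hu|hu
      · rw [hFlt u hu]; exact ha12
      · rw [hFmid u hu (lt_of_le_of_lt huv hv1)]
    rcases lt_or_ge v 1 with hv2|hv2
    · have hvm : v ∈ Ico x₁ 1 := ⟨hv1, hv2⟩
      rw [hFright v hvm]
      rcases lt_or_ge u x with hu|hu
      · rw [hFlt u hu]; exact ha12.trans (hO2 v hvm)
      rcases lt_or_ge u x₁ with hu1|hu1
      · rw [hFmid u hu hu1]; exact hO2 v hvm
      · have hum : u ∈ Ico x₁ 1 := ⟨hu1, huv.trans_lt hv2⟩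
        rw [hFright u hum]; exact hO3 u v hum hvm huv
    · rw [hFtop v hv2]
      have hx₁m : x₁ ∈ Ico x₁ 1 := ⟨le_rfl, hx₁⟩
      rcases lt_or_ge u x with hu|hu
      · rw [hFlt u hu]; exact ha12.trans ((hO2 x₁ hx₁m).trans (hO4 x₁ hx₁m))
      rcases lt_or_ge u x₁ with hu1|hu1
      · rw [hFmid u hu hu1]; exact (hO2 x₁ hx₁m).trans (hO4 x₁ hx₁m)
      rcases lt_or_ge u 1 with hu2|hu2
      · rw [hFright u ⟨hu1, hu2⟩]; exact hO4 u ⟨hu1, hu2⟩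
      · rw [hFtop u hu2]
  refine ⟨hM, ?_⟩
  set S := hM.stieltjesFunction with hS
  set μ := S.measure with hμ
  have hSval : ∀ t : ℝ, S t = Function.rightLim (pickandsD C) t := fun t =>
    Monotone.stieltjesFunction_eq hM t
  have hf1 : ∀ t : ℝ, t < x → S t = a1 := by
    intro t ht
    rw [hSval]; exact rightLim_const_on ht (fun v _ hv2 => hFlt v hv2)
  have hf2 : ∀ t : ℝ, x ≤ t → t < x₁ → S t = a2 := by
    intro t ht ht'
    rw [hSval]; exact rightLim_const_on ht' (fun v hv1 hv2 => hFmid v (ht.trans hv1.le) hv2)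
  have hlf0 : leftLim S 0 = a1 :=
    leftLim_const_on (by linarith : (-1:ℝ) < 0) (fun v _ hv2 => hf1 v (hv2.trans hx))
  have hlfx : leftLim S x = a1 :=
    leftLim_const_on (by linarith : x - 1 < x) (fun v _ hv2 => hf1 v hv2)
  have hlfx₁ : leftLim S x₁ = a2 :=
    leftLim_const_on hxx (fun v hv1 hv2 => hf2 v hv1.le hv2)
  have hcge : a2 ≤ S x₁ := by
    rw [hSval]
    have h1' : pickandsD C x₁ ≤ Function.rightLim (pickandsD C) x₁ := hM.le_rightLim le_rfl
    refine le_trans ?_ h1'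
    rw [hFright x₁ ⟨le_rfl, hx₁⟩]; exact hO2 x₁ ⟨le_rfl, hx₁⟩
  have hμ1 : μ (Ico 0 x) = 0 := by
    rw [hμ, StieltjesFunction.measure_Ico, hlfx, hlf0, sub_self, ENNReal.ofReal_zero]
  have hμ2 : μ (Ioo x x₁) = 0 := by
    rw [hμ, StieltjesFunction.measure_Ioo, hlfx₁, hf2 x le_rfl hxx, sub_self, ENNReal.ofReal_zero]
  have hμx : μ {x} = ENNReal.ofReal (a2 - a1) := by
    rw [hμ, StieltjesFunction.measure_singleton, hf2 x le_rfl hxx, hlfx]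
  have hμx₁ : μ {x₁} = ENNReal.ofReal (S x₁ - a2) := by
    rw [hμ, StieltjesFunction.measure_singleton, hlfx₁]
  have hμIoo : μ (Ioo x₁ 1) ≠ ⊤ := by
    rw [hμ, StieltjesFunction.measure_Ioo]; exact ENNReal.ofReal_ne_top
  have hμ1s : μ {1} ≠ ⊤ := by
    rw [hμ, StieltjesFunction.measure_singleton]; exact ENNReal.ofReal_ne_top
  set g : ℝ → ℝ := fun t => t * (1 - t) / C t with hg
  -- set decomposition
  have hsub : Icc (0:ℝ) 1 =ᵐ[μ] ({x} ∪ ({x₁} ∪ (Ioo x₁ 1 ∪ {1})) : Set ℝ) := by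
    rw [MeasureTheory.ae_eq_set]
    constructor
    · refine measure_mono_null (fun t ht => ?_) (measure_union_null hμ1 hμ2)
      obtain ⟨⟨ht0, ht1⟩, htS⟩ := ht
      simp only [mem_union, mem_singleton_iff, mem_Ioo, not_or, not_and] at htS
      obtain ⟨htx, htx₁, htIoo, ht1'⟩ := htS
      simp only [mem_union, mem_Ico, mem_Ioo]
      rcases lt_trichotomy t x with h|h|h
      · exact Or.inl ⟨ht0, h⟩
      · exact absurd h htx
      rcases lt_trichotomy t x₁ with h'|h'|h'
      · exact Or.inr ⟨h, h'⟩
      · exact absurd h' htx₁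
      · exfalso
        rcases ht1.lt_or_eq with h''|h''
        · exact htIoo h' h''
        · exact ht1' h''
    · have hsubset : ({x} ∪ ({x₁} ∪ (Ioo x₁ 1 ∪ {1})) : Set ℝ) ⊆ Icc 0 1 := by
        intro t ht
        simp only [mem_union, mem_singleton_iff, mem_Ioo] at ht
        rcases ht with rfl|rfl|⟨h1', h2'⟩|rfl
        · exact hxI
        · exact hx₁I
        · exact ⟨(hx₁0.trans h1').le, h2'.le⟩
        · exact ⟨zero_le_one, le_rfl⟩
      rw [diff_eq_empty.2 hsubset]
      exact measure_empty
  have hgmble : AEStronglyMeasurable g (μ.restrict (Ioo x₁ 1)) := by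
    have hcont : ContinuousOn g (Ioo x₁ 1) := by
      apply ContinuousOn.div
      · exact (continuous_id.mul (continuous_const.sub continuous_id)).continuousOn
      · refine (hcv.continuousOn_interior).mono ?_
        rw [interior_Icc]
        exact fun t ht => ⟨hx₁0.trans ht.1, ht.2⟩
      · exact fun t ht => (hpos t ⟨(hx₁0.trans ht.1).le, ht.2.le⟩).ne'
    exact hcont.aestronglyMeasurable measurableSet_Ioo
  have hgIoo : IntegrableOn g (Ioo x₁ 1) μ := by
    haveI : IsFiniteMeasure (μ.restrict (Ioo x₁ 1)) :=
      ⟨by rw [Measure.restrict_apply_univ]; exact hμIoo.lt_top⟩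
    refine Integrable.mono' (integrable_const 2) hgmble ?_
    filter_upwards [ae_restrict_mem measurableSet_Ioo] with t ht
    have h0 : 0 < t := hx₁0.trans ht.1
    have h1' : t < 1 := ht.2
    have hc2 := hhalf t ⟨h0.le, h1'.le⟩
    rw [hg]
    rw [Real.norm_of_nonneg (div_nonneg (by nlinarith) (by linarith))]
    rw [div_le_iff₀ (by linarith)]
    nlinarith
  have hgx : IntegrableOn g {x} μ :=
    (integrableOn_singleton_iff).2 (Or.inr (by rw [hμx]; exact ENNReal.ofReal_lt_top))
  have hgx₁ : IntegrableOn g {x₁} μ :=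
    (integrableOn_singleton_iff).2 (Or.inr (by rw [hμx₁]; exact ENNReal.ofReal_lt_top))
  have hg1 : IntegrableOn g {1} μ :=
    (integrableOn_singleton_iff).2 (Or.inr hμ1s.lt_top)
  have hd3 : Disjoint (Ioo x₁ 1) ({1} : Set ℝ) := by
    rw [Set.disjoint_singleton_right]
    simp [mem_Ioo]
  have hd2 : Disjoint ({x₁} : Set ℝ) (Ioo x₁ 1 ∪ {1}) := by
    rw [Set.disjoint_singleton_left]
    simp only [mem_union, mem_Ioo, mem_singleton_iff, not_or]
    exact ⟨fun h => absurd h.1 (lt_irrefl x₁), hx₁.ne⟩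
  have hd1 : Disjoint ({x} : Set ℝ) ({x₁} ∪ (Ioo x₁ 1 ∪ {1})) := by
    rw [Set.disjoint_singleton_left]
    simp only [mem_union, mem_singleton_iff, mem_Ioo, not_or]
    refine ⟨hxx.ne, fun h => absurd (h.1) (not_lt.2 hxx.le), ?_⟩
    exact fun h => absurd h (by linarith [hxx.trans hx₁] : x ≠ 1)
  have hg1val : g 1 = 0 := by rw [hg]; simp
  have key : ∫ t in Icc (0:ℝ) 1, g t ∂μ
      = g x * (a2 - a1) + g x₁ * (S x₁ - a2) + ∫ t in Ioo x₁ 1, g t ∂μ := by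
    rw [setIntegral_congr_set hsub]
    rw [setIntegral_union hd1 ((measurableSet_singleton x₁).union
      (measurableSet_Ioo.union (measurableSet_singleton 1))) hgx
      ((hgx₁.union (hgIoo.union hg1)))]
    rw [setIntegral_union hd2 (measurableSet_Ioo.union (measurableSet_singleton 1)) hgx₁
      (hgIoo.union hg1)]
    rw [setIntegral_union hd3 (measurableSet_singleton 1) hgIoo hg1]
    rw [integral_singleton, integral_singleton, integral_singleton]
    simp only [measureReal_def]
    rw [hμx, hμx₁, hg1val]
    rw [ENNReal.toReal_ofReal (by linarith), ENNReal.toReal_ofReal (by linarith)]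
    simp only [smul_eq_mul, mul_zero, add_zero]
    ring
  have : kendallTau C = ∫ t in Icc (0:ℝ) 1, g t ∂μ := by
    rw [kendallTau, dif_pos hM]
  rw [this, key, hSval x₁]

end KendallTauAux

section KendallTauMain
open MeasureTheory Set Filter Function
open scoped Topology ENNReal

/-- the change of Kendall's tau under insertion of a new vertex `(x, y)`
on the first affine piece `[0,x₁]` of a Pickands dependence function `A`
(here `y₁ = A x₁`). -/
theorem kendallTau_insert_vertex (A B : ℝ → ℝ) (x₁ x y : ℝ)
    (hA : IsPickands A) (hx₁ : x₁ ∈ Set.Ioo (0 : ℝ) 1)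
    (hAaff : AffineOnIcc A 0 x₁) (hx : x ∈ Set.Ioo 0 x₁)
    (hB : IsPickands B) (hBA : ∀ t ∈ Set.Icc x₁ 1, B t = A t)
    (hB1 : AffineOnIcc B 0 x) (hB2 : AffineOnIcc B x x₁) (hBx : B x = y) :
    kendallTau B - kendallTau A =
      (x₁ - x + x * A x₁ - x₁ * y) * (A x₁ - y - x * A x₁ + x₁ * y) /
        ((x₁ - x) * y * A x₁) := by
  obtain ⟨a, b, hAab⟩ := hAaff
  obtain ⟨p1, q1, hB1'⟩ := hB1
  obtain ⟨p2, q2, hB2'⟩ := hB2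
  have hx0 : 0 < x := hx.1
  have hxx : x < x₁ := hx.2
  have hx₁1 : x₁ < 1 := hx₁.2
  have hx₁0 : 0 < x₁ := hx₁.1
  have hxne : x₁ - x ≠ 0 := sub_ne_zero.2 hxx.ne'
  obtain ⟨hMB, hτB⟩ := kendallTau_piecewise hB hx0 hxx hx₁1 hB1' hB2'
  obtain ⟨hMA, hτA⟩ := kendallTau_piecewise hA hx0 hxx hx₁1
    (fun t ht => hAab t ⟨ht.1, ht.2.trans hxx.le⟩)
    (fun t ht => hAab t ⟨hx0.le.trans ht.1, ht.2⟩)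
  -- pickandsD agree to the right of x₁
  have hFAB : ∀ u : ℝ, x₁ < u → pickandsD A u = pickandsD B u := by
    intro u hu
    have hu0 : ¬ u < 0 := not_lt.2 (hx₁0.trans hu).le
    rcases lt_or_ge u 1 with h1|h1
    · rw [pickandsD, pickandsD, if_neg hu0, if_neg hu0, if_pos h1, if_pos h1]
      refine (Filter.EventuallyEq.derivWithin_eq ?_ ?_).symm
      · filter_upwards [Ioo_mem_nhdsGT_of_mem ⟨le_refl u, h1⟩] with v hv
        exact hBA v ⟨(hu.trans hv.1).le, hv.2.le⟩
      · exact hBA u ⟨hu.le, h1.le⟩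
    · rw [pickandsD, pickandsD, if_neg hu0, if_neg hu0,
        if_neg (not_lt.2 h1), if_neg (not_lt.2 h1)]
  have hrlim : ∀ t : ℝ, x₁ ≤ t →
      Function.rightLim (pickandsD A) t = Function.rightLim (pickandsD B) t := by
    intro t ht
    have htt : Tendsto (pickandsD B) (𝓝[>] t) (𝓝 (Function.rightLim (pickandsD A) t)) := by
      refine Tendsto.congr' ?_ (hMA.tendsto_rightLim t)
      filter_upwards [self_mem_nhdsWithin] with v hv
      exact hFAB v (ht.trans_lt hv)
    exact (rightLim_eq_of_tendsto htt).symm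
  have hS : ∀ t : ℝ, x₁ ≤ t → hMA.stieltjesFunction t = hMB.stieltjesFunction t := by
    intro t ht
    rw [Monotone.stieltjesFunction_eq, Monotone.stieltjesFunction_eq]
    exact hrlim t ht
  have hrest : hMA.stieltjesFunction.measure.restrict (Set.Ioi x₁)
      = hMB.stieltjesFunction.measure.restrict (Set.Ioi x₁) := by
    refine Measure.ext_of_Ioc' _ _ ?_ ?_
    · intro u v _
      rw [Measure.restrict_apply measurableSet_Ioc]
      exact ((measure_mono inter_subset_left).trans_lt
        (by rw [StieltjesFunction.measure_Ioc]; exact ENNReal.ofReal_lt_top)).ne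
    · intro u v _
      rw [Measure.restrict_apply measurableSet_Ioc, Measure.restrict_apply measurableSet_Ioc,
        Set.Ioc_inter_Ioi,
        StieltjesFunction.measure_Ioc, StieltjesFunction.measure_Ioc]
      rcases le_or_gt v (u ⊔ x₁) with h|h
      · rw [ENNReal.ofReal_of_nonpos (sub_nonpos.2 (hMA.stieltjesFunction.mono h)),
          ENNReal.ofReal_of_nonpos (sub_nonpos.2 (hMB.stieltjesFunction.mono h))]
      · rw [hS (u ⊔ x₁) le_sup_right, hS v (le_sup_right.trans h.le)]
  have htail : (∫ t in Set.Ioo x₁ 1, t * (1 - t) / A t ∂hMA.stieltjesFunction.measure)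
      = ∫ t in Set.Ioo x₁ 1, t * (1 - t) / B t ∂hMB.stieltjesFunction.measure := by
    have hmm : hMA.stieltjesFunction.measure.restrict (Set.Ioo x₁ 1)
        = hMB.stieltjesFunction.measure.restrict (Set.Ioo x₁ 1) := by
      rw [← Measure.restrict_restrict_of_subset
          (Set.Ioo_subset_Ioi_self : Set.Ioo x₁ 1 ⊆ Set.Ioi x₁) (μ := hMA.stieltjesFunction.measure),
        hrest, Measure.restrict_restrict_of_subset Set.Ioo_subset_Ioi_self]
    rw [hmm]
    refine setIntegral_congr_fun measurableSet_Ioo (fun t ht => ?_)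
    rw [hBA t ⟨ht.1.le, ht.2.le⟩]
  -- basic values
  have hB0 : B 0 = 1 := by
    have h := hB.2 0 ⟨le_rfl, zero_le_one⟩
    have h1 : (1:ℝ) ≤ B 0 := le_trans (by norm_num) h.1
    linarith [h.2]
  have hA0 : A 0 = 1 := by
    have h := hA.2 0 ⟨le_rfl, zero_le_one⟩
    have h1 : (1:ℝ) ≤ A 0 := le_trans (by norm_num) h.1
    linarith [h.2]
  have hy : 0 < y := by
    rw [← hBx]
    exact lt_of_lt_of_le hx0 ((le_max_right _ _).trans
      (hB.2 x ⟨hx0.le, (hxx.trans hx₁1).le⟩).1)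
  have hy₁ : 0 < A x₁ :=
    lt_of_lt_of_le hx₁0 ((le_max_right _ _).trans (hA.2 x₁ ⟨hx₁0.le, hx₁1.le⟩).1)
  have hBx₁ : B x₁ = A x₁ := hBA x₁ ⟨le_rfl, hx₁1.le⟩
  -- coefficients
  have hq1 : q1 = 1 := by
    have := hB1' 0 ⟨le_rfl, hx0.le⟩
    rw [hB0] at this; linarith
  have hp1 : p1 = (y - 1) / x := by
    have := hB1' x ⟨hx0.le, le_rfl⟩
    rw [hBx, hq1] at this
    rw [eq_div_iff hx0.ne']
    linarith
  have hp2 : p2 = (A x₁ - y) / (x₁ - x) := by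
    have h1 := hB2' x ⟨le_rfl, hxx.le⟩
    have h2 := hB2' x₁ ⟨hxx.le, le_rfl⟩
    rw [hBx] at h1
    rw [hBx₁] at h2
    rw [eq_div_iff hxne]
    linear_combination h1 - h2
  have hb : b = 1 := by
    have := hAab 0 ⟨le_rfl, hx₁0.le⟩
    rw [hA0] at this; linarith
  have ha : a = (A x₁ - 1) / x₁ := by
    have := hAab x₁ ⟨hx₁0.le, le_rfl⟩
    rw [hb] at this
    rw [eq_div_iff hx₁0.ne']
    linarith
  rw [hτB, hτA, htail, hrlim x₁ le_rfl, hBx, hBx₁]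
  rw [hp1, hp2, ha]
  field_simp
  ring

end KendallTauMain
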